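/- Theorem 5: for every state ρ and every ε ≥ 0, the one-shot coherence cost under DIO is characterized by the smoothed monotone C_{Δ,max}: C_{Δ,max}^ε(ρ) ≤ C_DIO^ε(ρ) ≤ C_{Δ,max}^ε(ρ) + 1. -/

import Mathlib

open scoped Matrix ComplexOrder

namespace OneShot

variable {ι κ : Type*} [Fintype ι] [DecidableEq ι] [Fintype κ] [DecidableEq κ]

/-- A quantum state: a positive semidefinite matrix with unit trace. -/
def IsState (ρ : Matrix ι ι ℂ) : Prop := ρ.PosSemidef ∧ ρ.trace = 1

/-- An incoherent state: a state that is diagonal in the computational basis. -/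
def IsIncoherent (ρ : Matrix ι ι ℂ) : Prop := IsState ρ ∧ ρ.IsDiag

/-- The completely dephasing channel `Δ`. -/
def dephase (ρ : Matrix ι ι ℂ) : Matrix ι ι ℂ := Matrix.diagonal fun i => ρ i i

/-- The max-relative entropy of coherence
`C_max(ρ) = min_{δ ∈ 𝓘} D_max(ρ‖δ) = log₂ min {λ ≥ 0 | ∃ δ ∈ 𝓘, ρ ≤ λ δ}`. -/
noncomputable def Cmax (ρ : Matrix ι ι ℂ) : ℝ :=
  Real.logb 2 (sInf {l : ℝ | 0 ≤ l ∧ ∃ δ, IsIncoherent δ ∧ (l • δ - ρ).PosSemidef})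

/-- `C_{Δ,max}(ρ) = log₂ min {λ ≥ 0 | ρ ≤ λ Δ(ρ)}`. -/
noncomputable def CDmax (ρ : Matrix ι ι ℂ) : ℝ :=
  Real.logb 2 (sInf {l : ℝ | 0 ≤ l ∧ (l • dephase ρ - ρ).PosSemidef})

/-- Complete positivity of a linear map on matrices. -/
def CompletelyPositive (Λ : Matrix ι ι ℂ →ₗ[ℂ] Matrix κ κ ℂ) : Prop :=
  ∀ (k : ℕ) (M : Matrix (Fin k × ι) (Fin k × ι) ℂ), M.PosSemidef →
    (Matrix.of fun p q : Fin k × κ =>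
      Λ (Matrix.of fun x y => M (p.1, x) (q.1, y)) p.2 q.2).PosSemidef

/-- Trace preservation. -/
def TracePreserving (Λ : Matrix ι ι ℂ →ₗ[ℂ] Matrix κ κ ℂ) : Prop :=
  ∀ A, (Λ A).trace = A.trace

/-- A maximally incoherent operation (MIO): a CPTP map sending every incoherent state
to an incoherent state. -/
def IsMIO (Λ : Matrix ι ι ℂ →ₗ[ℂ] Matrix κ κ ℂ) : Prop :=
  CompletelyPositive Λ ∧ TracePreserving Λ ∧ ∀ δ, IsIncoherent δ → IsIncoherent (Λ δ)

/-- A dephasing-covariant incoherent operation (DIO): a CPTP map commuting with `Δ`. -/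
def IsDIO (Λ : Matrix ι ι ℂ →ₗ[ℂ] Matrix ι ι ℂ) : Prop :=
  CompletelyPositive Λ ∧ TracePreserving Λ ∧ ∀ ρ, Λ (dephase ρ) = dephase (Λ ρ)

/-- An incoherent-preserving (Kraus) operator: `K δ Kᴴ` is a nonnegative multiple of an
incoherent state, for every incoherent state `δ`. -/
def IncoherentPreserving (K : Matrix κ ι ℂ) : Prop :=
  ∀ δ : Matrix ι ι ℂ, IsIncoherent δ →
    ∃ c : ℝ, 0 ≤ c ∧ ∃ δ' : Matrix κ κ ℂ, IsIncoherent δ' ∧ K * δ * Kᴴ = (c : ℂ) • δ'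

/-- An incoherent operation (IO). -/
def IsIO (Λ : Matrix ι ι ℂ →ₗ[ℂ] Matrix κ κ ℂ) : Prop :=
  ∃ (N : ℕ) (K : Fin N → Matrix κ ι ℂ),
    (∀ n, IncoherentPreserving (K n)) ∧ (∑ n, (K n)ᴴ * K n = 1) ∧
    ∀ ρ, Λ ρ = ∑ n, K n * ρ * (K n)ᴴ

/-- A strictly incoherent operation (SIO). -/
def IsSIO (Λ : Matrix ι ι ℂ →ₗ[ℂ] Matrix κ κ ℂ) : Prop :=
  ∃ (N : ℕ) (K : Fin N → Matrix κ ι ℂ),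
    (∀ n, IncoherentPreserving (K n)) ∧ (∀ n, IncoherentPreserving (K n)ᴴ) ∧
    (∑ n, (K n)ᴴ * K n = 1) ∧ ∀ ρ, Λ ρ = ∑ n, K n * ρ * (K n)ᴴ

/-- The outer product `|ψ⟩⟨ψ|`. -/
def outer (ψ : ι → ℂ) : Matrix ι ι ℂ := Matrix.of fun i j => ψ i * star (ψ j)

/-- `T ψ` is the number of nonzero computational-basis coefficients of `ψ`. -/
noncomputable def T (ψ : ι → ℂ) : ℕ := (Finset.univ.filter fun i => ψ i ≠ 0).card

/-- A finite pure-state decomposition `ρ = Σ_j p_j |ψ_j⟩⟨ψ_j|`. -/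
def IsDecomposition (ρ : Matrix ι ι ℂ) (n : ℕ) (p : Fin n → ℝ) (ψ : Fin n → ι → ℂ) : Prop :=
  (∀ j, 0 < p j) ∧ (∑ j, p j = 1) ∧ (∀ j, ∑ i, Complex.normSq (ψ j i) = 1) ∧
    ρ = ∑ j, p j • outer (ψ j)

/-- `C_0(ρ) = min over decompositions of max_j log₂ T(ψ_j)`. -/
noncomputable def C0 (ρ : Matrix ι ι ℂ) : ℝ :=
  sInf { r | ∃ n p ψ, IsDecomposition ρ n p ψ ∧
    r = Real.logb 2 (↑(Finset.univ.sup fun j => T (ψ j)) : ℝ) }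

/-- Matrix square root of a positive semidefinite matrix (junk value `0` elsewhere). -/
noncomputable def msqrt (A : Matrix ι ι ℂ) : Matrix ι ι ℂ :=
  letI := Classical.propDecidable A.PosSemidef
  if h : A.PosSemidef then
    (h.1.eigenvectorUnitary : Matrix ι ι ℂ) *
      Matrix.diagonal ((↑) ∘ (h.1.eigenvalues · |>.sqrt)) *
      (star h.1.eigenvectorUnitary : Matrix ι ι ℂ)
  else 0

/-- Uhlmann fidelity `F(ρ,σ) = (Tr √(√ρ σ √ρ))²`. -/
noncomputable def Fid (ρ σ : Matrix ι ι ℂ) : ℝ :=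
  ((msqrt (msqrt ρ * σ * msqrt ρ)).trace.re) ^ 2

/-- Smoothed `C_max`. -/
noncomputable def Cmaxeps (ρ : Matrix ι ι ℂ) (ε : ℝ) : ℝ :=
  sInf { r | ∃ ρ', IsState ρ' ∧ 1 - ε ≤ Fid ρ ρ' ∧ r = Cmax ρ' }

/-- Smoothed `C_{Δ,max}`. -/
noncomputable def CDmaxeps (ρ : Matrix ι ι ℂ) (ε : ℝ) : ℝ :=
  sInf { r | ∃ ρ', IsState ρ' ∧ 1 - ε ≤ Fid ρ ρ' ∧ r = CDmax ρ' }

/-- Smoothed `C_0`. -/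
noncomputable def C0eps (ρ : Matrix ι ι ℂ) (ε : ℝ) : ℝ :=
  sInf { r | ∃ ρ', IsState ρ' ∧ 1 - ε ≤ Fid ρ ρ' ∧ r = C0 ρ' }

/-- The maximally coherent state `Ψ_M = |Ψ_M⟩⟨Ψ_M|` of dimension `M`. -/
noncomputable def PsiM (M : ℕ) : Matrix (Fin M) (Fin M) ℂ := Matrix.of fun _ _ => (1 : ℂ) / M

/-- One-shot coherence cost under MIO. -/
noncomputable def CMIOeps (ρ : Matrix ι ι ℂ) (ε : ℝ) : ℝ :=
  sInf { r | ∃ M : ℕ, 1 ≤ M ∧ r = Real.logb 2 M ∧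
    ∃ Λ : Matrix (Fin M) (Fin M) ℂ →ₗ[ℂ] Matrix ι ι ℂ, IsMIO Λ ∧ 1 - ε ≤ Fid ρ (Λ (PsiM M)) }

/-- One-shot coherence cost under DIO. -/
noncomputable def CDIOeps (ρ : Matrix ι ι ℂ) (ε : ℝ) : ℝ :=
  sInf { r | ∃ M : ℕ, 1 ≤ M ∧ r = Real.logb 2 M ∧
    ∃ Λ : Matrix (Fin M) (Fin M) ℂ →ₗ[ℂ] Matrix ι ι ℂ,
      CompletelyPositive Λ ∧ TracePreserving Λ ∧ (∀ ω, Λ (dephase ω) = dephase (Λ ω)) ∧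
      1 - ε ≤ Fid ρ (Λ (PsiM M)) }

/-- One-shot coherence cost under IO. -/
noncomputable def CIOeps (ρ : Matrix ι ι ℂ) (ε : ℝ) : ℝ :=
  sInf { r | ∃ M : ℕ, 1 ≤ M ∧ r = Real.logb 2 M ∧
    ∃ Λ : Matrix (Fin M) (Fin M) ℂ →ₗ[ℂ] Matrix ι ι ℂ, IsIO Λ ∧ 1 - ε ≤ Fid ρ (Λ (PsiM M)) }

/-- One-shot coherence cost under SIO. -/
noncomputable def CSIOeps (ρ : Matrix ι ι ℂ) (ε : ℝ) : ℝ :=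
  sInf { r | ∃ M : ℕ, 1 ≤ M ∧ r = Real.logb 2 M ∧
    ∃ Λ : Matrix (Fin M) (Fin M) ℂ →ₗ[ℂ] Matrix ι ι ℂ, IsSIO Λ ∧ 1 - ε ≤ Fid ρ (Λ (PsiM M)) }

/-- Matrix logarithm (base 2) via the spectral decomposition, with `log₂ 0 = 0` junk
convention on the kernel, and junk value `0` on non-Hermitian matrices. -/
noncomputable def mlog2 (A : Matrix ι ι ℂ) : Matrix ι ι ℂ :=
  letI := Classical.propDecidable A.IsHermitian
  if h : A.IsHermitian then
    (h.eigenvectorUnitary : Matrix ι ι ℂ) *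
      Matrix.diagonal (fun i => (Real.logb 2 (h.eigenvalues i) : ℂ)) *
      (h.eigenvectorUnitary : Matrix ι ι ℂ)ᴴ
  else 0

/-- The relative entropy of coherence `C_r(ρ) = min_{δ ∈ 𝓘} S(ρ‖δ)`, where the minimum
is (equivalently) restricted to those `δ` whose support contains the support of `ρ`,
on which `S(ρ‖δ) = Tr[ρ (log₂ ρ − log₂ δ)]` is finite. -/
noncomputable def Cr (ρ : Matrix ι ι ℂ) : ℝ :=
  sInf { r | ∃ δ, IsIncoherent δ ∧ (∀ v : ι → ℂ, δ.mulVec v = 0 → ρ.mulVec v = 0) ∧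
    r = ((ρ * (mlog2 ρ - mlog2 δ)).trace).re }

/-- Von Neumann entropy (base 2). -/
noncomputable def vN (σ : Matrix ι ι ℂ) : ℝ := -((σ * mlog2 σ).trace.re)

/-- The coherence of formation. -/
noncomputable def Cf (ρ : Matrix ι ι ℂ) : ℝ :=
  sInf { r | ∃ n p ψ, IsDecomposition ρ n p ψ ∧
    r = ∑ j, p j * vN (dephase (outer (ψ j))) }

/-- The set `A_ρ = { (1/t)[(1+t)Δ(ρ) − ρ] : t > 0, (1+t)Δ(ρ) − ρ ≥ 0 }`. -/
def Aset (ρ : Matrix ι ι ℂ) : Set (Matrix ι ι ℂ) :=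
  { σ | ∃ t : ℝ, 0 < t ∧ ((1 + t) • dephase ρ - ρ).PosSemidef ∧
      σ = t⁻¹ • ((1 + t) • dephase ρ - ρ) }

/-- The `n`-fold tensor power `ρ^{⊗ n}`. -/
def tpow (ρ : Matrix ι ι ℂ) (n : ℕ) : Matrix (Fin n → ι) (Fin n → ι) ℂ :=
  Matrix.of fun i j => ∏ t, ρ (i t) (j t)

/-! ### Auxiliary lemmas for Theorem 5 -/

section Aux

lemma real_smul_eqC (r : ℝ) (A : Matrix ι ι ℂ) : r • A = (r : ℂ) • A := by
  ext i j
  simp [Complex.real_smul]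

lemma psd_smul {A : Matrix ι ι ℂ} (hA : A.PosSemidef) {c : ℝ} (hc : 0 ≤ c) :
    ((c : ℂ) • A).PosSemidef := by
  refine Matrix.PosSemidef.of_dotProduct_mulVec_nonneg ?_ fun x => ?_
  · have h1 : star (c : ℂ) = (c : ℂ) := by
      simp [Complex.star_def, Complex.conj_ofReal]
    rw [Matrix.IsHermitian, Matrix.conjTranspose_smul, h1, hA.1]
  · have h2 : star x ⬝ᵥ ((c : ℂ) • A) *ᵥ x = (c : ℂ) * (star x ⬝ᵥ A *ᵥ x) := by
      rw [Matrix.smul_mulVec, dotProduct_smul, smul_eq_mul]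
    rw [h2]
    exact mul_nonneg (Complex.zero_le_real.mpr hc) (hA.dotProduct_mulVec_nonneg x)

lemma psd_diag_nonneg {A : Matrix ι ι ℂ} (hA : A.PosSemidef) (i : ι) : 0 ≤ A i i := by
  have h := hA.dotProduct_mulVec_nonneg (Pi.single i 1 : ι → ℂ)
  have hs : star (Pi.single i (1:ℂ) : ι → ℂ) = Pi.single i (1:ℂ) := by
    funext t; simp [Pi.single_apply, apply_ite (star : ℂ → ℂ)]
  rw [hs, Matrix.mulVec_single, single_dotProduct, one_mul] at h
  simpa using h

lemma psd_trace_nonneg {A : Matrix ι ι ℂ} (hA : A.PosSemidef) : 0 ≤ A.trace :=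
  Finset.sum_nonneg fun i _ => psd_diag_nonneg hA i

lemma dephase_psd {A : Matrix ι ι ℂ} (hA : A.PosSemidef) : (dephase A).PosSemidef :=
  Matrix.PosSemidef.diagonal fun i => psd_diag_nonneg hA i

lemma trace_dephase (A : Matrix ι ι ℂ) : (dephase A).trace = A.trace := by
  simp [dephase, Matrix.trace_diagonal, Matrix.trace]

lemma dephase_add (A B : Matrix ι ι ℂ) : dephase (A + B) = dephase A + dephase B := by
  ext i j
  by_cases h : i = j
  · subst h; simp [dephase]
  · simp [dephase, Matrix.diagonal_apply_ne _ h]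

lemma dephase_sub (A B : Matrix ι ι ℂ) : dephase (A - B) = dephase A - dephase B := by
  ext i j
  by_cases h : i = j
  · subst h; simp [dephase]
  · simp [dephase, Matrix.diagonal_apply_ne _ h]

lemma dephase_smul (c : ℂ) (A : Matrix ι ι ℂ) : dephase (c • A) = c • dephase A := by
  ext i j
  by_cases h : i = j
  · subst h; simp [dephase]
  · simp [dephase, Matrix.diagonal_apply_ne _ h]

lemma dephase_dephase (A : Matrix ι ι ℂ) : dephase (dephase A) = dephase A := by
  ext i j
  by_cases h : i = j
  · subst h; simp [dephase]
  · simp [dephase, Matrix.diagonal_apply_ne _ h]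

/-- `ρ ≤ d · Δ(ρ)` for every positive semidefinite `ρ`. -/
lemma card_smul_dephase_sub_psd {A : Matrix ι ι ℂ} (hA : A.PosSemidef) :
    (((Fintype.card ι : ℝ)) • dephase A - A).PosSemidef := by
  rw [real_smul_eqC, show (((Fintype.card ι : ℝ)) : ℂ) = (Fintype.card ι : ℂ) by push_cast; ring]
  refine Matrix.PosSemidef.of_dotProduct_mulVec_nonneg ?_ fun v => ?_
  · exact ((psd_smul (dephase_psd hA) (by positivity)).1).sub hA.1
  · have key : ∀ i j : ι,
        0 ≤ star (v i) * A i i * v i + star (v j) * A j j * v j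
            - star (v i) * A i j * v j - star (v j) * A j i * v i := by
      intro i j
      have h0 := hA.dotProduct_mulVec_nonneg ((Pi.single i (v i) : ι → ℂ) - Pi.single j (v j))
      have hstar : star ((Pi.single i (v i) : ι → ℂ) - Pi.single j (v j))
          = Pi.single i (star (v i)) - Pi.single j (star (v j)) := by
        funext t
        simp only [Pi.sub_apply, Pi.star_apply, Pi.single_apply, star_sub]
        split_ifs <;> simp
      rw [hstar, Matrix.mulVec_sub, Matrix.mulVec_single, Matrix.mulVec_single,
        sub_dotProduct, dotProduct_sub, dotProduct_sub,
        single_dotProduct, single_dotProduct, single_dotProduct,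
        single_dotProduct] at h0
      simp only [Pi.smul_apply, Matrix.col_apply, op_smul_eq_mul] at h0
      refine le_of_le_of_eq h0 ?_
      ring
    have hsum : (0:ℂ) ≤ ∑ i : ι, ∑ j : ι,
        (star (v i) * A i i * v i + star (v j) * A j j * v j
          - star (v i) * A i j * v j - star (v j) * A j i * v i) :=
      Finset.sum_nonneg fun i _ => Finset.sum_nonneg fun j _ => key i j
    set S1 := ∑ i : ι, star (v i) * A i i * v i with hS1
    set S2 := ∑ i : ι, ∑ j : ι, star (v i) * A i j * v j with hS2
    have hexp : (∑ i : ι, ∑ j : ι,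
        (star (v i) * A i i * v i + star (v j) * A j j * v j
          - star (v i) * A i j * v j - star (v j) * A j i * v i))
        = 2 * ((Fintype.card ι : ℂ) * S1 - S2) := by
      have e1 : (∑ i : ι, ∑ _j : ι, star (v i) * A i i * v i)
          = (Fintype.card ι : ℂ) * S1 := by
        rw [hS1, Finset.mul_sum]
        exact Finset.sum_congr rfl fun i _ => by
          rw [Finset.sum_const, Finset.card_univ, nsmul_eq_mul]
      have e2 : (∑ _i : ι, ∑ j : ι, star (v j) * A j j * v j)
          = (Fintype.card ι : ℂ) * S1 := by
        rw [Finset.sum_comm]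
        rw [hS1, Finset.mul_sum]
        exact Finset.sum_congr rfl fun i _ => by
          rw [Finset.sum_const, Finset.card_univ, nsmul_eq_mul]
      have e4 : (∑ i : ι, ∑ j : ι, star (v j) * A j i * v i) = S2 := by
        rw [Finset.sum_comm]
      calc (∑ i : ι, ∑ j : ι,
          (star (v i) * A i i * v i + star (v j) * A j j * v j
            - star (v i) * A i j * v j - star (v j) * A j i * v i))
          = (∑ i : ι, ∑ _j : ι, star (v i) * A i i * v i)
            + (∑ _i : ι, ∑ j : ι, star (v j) * A j j * v j)
            - S2 - (∑ i : ι, ∑ j : ι, star (v j) * A j i * v i) := by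
            rw [hS2]
            simp only [Finset.sum_sub_distrib, Finset.sum_add_distrib]
        _ = 2 * ((Fintype.card ι : ℂ) * S1 - S2) := by
            rw [e1, e2, e4]; ring
    rw [hexp] at hsum
    have hhalf : (0:ℂ) ≤ (2⁻¹ : ℂ) := by
      have : ((2⁻¹ : ℝ) : ℂ) = (2⁻¹ : ℂ) := by norm_num
      rw [← this]
      exact Complex.zero_le_real.mpr (by norm_num)
    have hfin : (0:ℂ) ≤ (Fintype.card ι : ℂ) * S1 - S2 := by
      have h2 := mul_nonneg hhalf hsum
      refine le_of_le_of_eq h2 ?_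
      ring
    have hgoal : star v ⬝ᵥ (((Fintype.card ι : ℂ) • dephase A - A) *ᵥ v)
        = (Fintype.card ι : ℂ) * S1 - S2 := by
      rw [Matrix.sub_mulVec, dotProduct_sub, Matrix.smul_mulVec,
        dotProduct_smul, smul_eq_mul]
      congr 1
      · congr 1
        simp only [dotProduct, dephase, Matrix.mulVec_diagonal, Pi.star_apply, hS1]
        exact Finset.sum_congr rfl fun i _ => by ring
      · simp only [dotProduct, Matrix.mulVec, Pi.star_apply, hS2, Finset.mul_sum]
        exact Finset.sum_congr rfl fun i _ => Finset.sum_congr rfl fun j _ => by ring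
    rw [hgoal]
    exact hfin

end Aux
section Aux2

lemma mem_S_one_le {ρ₀ : Matrix ι ι ℂ} (h : IsState ρ₀) {l : ℝ}
    (hl : (l • dephase ρ₀ - ρ₀).PosSemidef) : 1 ≤ l := by
  have h0 := psd_trace_nonneg hl
  rw [Matrix.trace_sub, Matrix.trace_smul, trace_dephase, h.2] at h0
  have he : l • (1:ℂ) - 1 = ((l - 1 : ℝ) : ℂ) := by
    rw [Complex.real_smul]
    push_cast
    ring
  rw [he] at h0
  have := Complex.zero_le_real.mp h0
  linarith

lemma S_upward {ρ₀ : Matrix ι ι ℂ} (h : ρ₀.PosSemidef) {l m : ℝ}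
    (hl : (l • dephase ρ₀ - ρ₀).PosSemidef) (hlm : l ≤ m) :
    (m • dephase ρ₀ - ρ₀).PosSemidef := by
  have hd : m • dephase ρ₀ - ρ₀ = (l • dephase ρ₀ - ρ₀) + ((m - l) • dephase ρ₀) := by
    rw [sub_smul]; abel
  rw [hd]
  refine hl.add ?_
  rw [real_smul_eqC]
  exact psd_smul (dephase_psd h) (by linarith)

lemma sInf_S_ge_one {ρ₀ : Matrix ι ι ℂ} (h : IsState ρ₀) :
    1 ≤ sInf {l : ℝ | 0 ≤ l ∧ (l • dephase ρ₀ - ρ₀).PosSemidef} := by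
  refine le_csInf ⟨(Fintype.card ι : ℝ), Nat.cast_nonneg _, card_smul_dephase_sub_psd h.1⟩
    fun l hl => mem_S_one_le h hl.2

lemma CDmax_nonneg {ρ₀ : Matrix ι ι ℂ} (h : IsState ρ₀) : 0 ≤ CDmax ρ₀ :=
  Real.logb_nonneg one_lt_two (sInf_S_ge_one h)

/-! ### Properties of the maximally coherent state -/

lemma psiM_psd {M : ℕ} : (PsiM M).PosSemidef := by
  refine Matrix.PosSemidef.of_dotProduct_mulVec_nonneg ?_ fun v => ?_
  · ext i j
    simp [PsiM, Matrix.conjTranspose_apply]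
  · have hv : ∀ i, (PsiM M *ᵥ v) i = (1/(M:ℂ)) * ∑ j, v j := by
      intro i
      simp only [Matrix.mulVec, dotProduct, PsiM, Matrix.of_apply]
      rw [Finset.mul_sum]
    have h0 : (0:ℂ) ≤ 1/(M:ℂ) := by
      rw [show (1/(M:ℂ)) = (((1/(M:ℝ)):ℝ):ℂ) by push_cast; ring]
      exact Complex.zero_le_real.mpr (by positivity)
    have he : star v ⬝ᵥ (PsiM M *ᵥ v) = (1/(M:ℂ)) * (star (∑ j, v j) * (∑ j, v j)) := by
      simp only [dotProduct, Pi.star_apply, hv]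
      rw [← Finset.sum_mul, star_sum]
      ring
    rw [he]
    exact mul_nonneg h0 (star_mul_self_nonneg _)

lemma one_sub_psiM_psd {M : ℕ} (hM : 1 ≤ M) :
    ((1 : Matrix (Fin M) (Fin M) ℂ) - PsiM M).PosSemidef := by
  have hM0 : (0:ℝ) < (M:ℝ) := by exact_mod_cast hM
  refine Matrix.PosSemidef.of_dotProduct_mulVec_nonneg (Matrix.isHermitian_one.sub psiM_psd.1) fun v => ?_
  have hv : ∀ i, (PsiM M *ᵥ v) i = (1/(M:ℂ)) * ∑ j, v j := by
    intro i
    simp only [Matrix.mulVec, dotProduct, PsiM, Matrix.of_apply]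
    rw [Finset.mul_sum]
  set s := ∑ j, v j with hs
  have he : star v ⬝ᵥ (((1 : Matrix (Fin M) (Fin M) ℂ) - PsiM M) *ᵥ v)
      = ((∑ i, Complex.normSq (v i) - (M:ℝ)⁻¹ * Complex.normSq s : ℝ) : ℂ) := by
    rw [Matrix.sub_mulVec, dotProduct_sub, Matrix.one_mulVec]
    have e1 : star v ⬝ᵥ v = ((∑ i, Complex.normSq (v i) : ℝ) : ℂ) := by
      push_cast
      simp only [dotProduct, Pi.star_apply]
      exact Finset.sum_congr rfl fun i _ => by
        rw [Complex.normSq_eq_conj_mul_self, Complex.star_def]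
    have e2 : star v ⬝ᵥ (PsiM M *ᵥ v) = (1/(M:ℂ)) * (star s * s) := by
      simp only [dotProduct, Pi.star_apply, hv]
      rw [← Finset.sum_mul, star_sum, hs]
      ring
    rw [e1, e2, Complex.star_def, ← Complex.normSq_eq_conj_mul_self]
    push_cast
    ring
  rw [he]
  refine Complex.zero_le_real.mpr ?_
  have hb : Complex.normSq s ≤ (M:ℝ) * ∑ i, Complex.normSq (v i) := by
    have h1 : ‖s‖ ≤ ∑ i, ‖v i‖ := by
      rw [hs]
      exact norm_sum_le _ _
    have h2 : (∑ i, ‖v i‖)^2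
        ≤ (Finset.univ.card : ℝ) * ∑ i, (‖v i‖)^2 := sq_sum_le_card_mul_sum_sq
    calc Complex.normSq s = ‖s‖ ^ 2 := (Complex.sq_norm s).symm
      _ ≤ (∑ i, ‖v i‖)^2 := by
          have := norm_nonneg s
          nlinarith [Finset.sum_nonneg (fun i (_ : i ∈ Finset.univ) => norm_nonneg (v i))]
      _ ≤ (Finset.univ.card : ℝ) * ∑ i, (‖v i‖)^2 := h2
      _ = (M:ℝ) * ∑ i, Complex.normSq (v i) := by
          rw [Finset.card_univ, Fintype.card_fin]
          congr 1
          exact Finset.sum_congr rfl fun i _ => Complex.sq_norm (v i)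
  have hinv : (M:ℝ)⁻¹ * Complex.normSq s ≤ ∑ i, Complex.normSq (v i) := by
    rw [inv_mul_le_iff₀ hM0]
    linarith
  linarith

lemma psiM_mul_self {M : ℕ} (hM : 1 ≤ M) : PsiM M * PsiM M = PsiM M := by
  have h0 : (M:ℂ) ≠ 0 := Nat.cast_ne_zero.mpr (by omega)
  ext i j
  simp only [Matrix.mul_apply, PsiM, Matrix.of_apply, Finset.sum_const, Finset.card_univ,
    Fintype.card_fin, nsmul_eq_mul]
  field_simp

lemma trace_psiM {M : ℕ} (hM : 1 ≤ M) : (PsiM M).trace = 1 := by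
  have h0 : (M:ℂ) ≠ 0 := Nat.cast_ne_zero.mpr (by omega)
  simp only [Matrix.trace, Matrix.diag, PsiM, Matrix.of_apply, Finset.sum_const,
    Finset.card_univ, Fintype.card_fin, nsmul_eq_mul]
  field_simp

lemma trace_psiM_mul_dephase {M : ℕ} (ω : Matrix (Fin M) (Fin M) ℂ) :
    (PsiM M * dephase ω).trace = (M:ℂ)⁻¹ * ω.trace := by
  simp only [Matrix.trace, Matrix.diag, dephase, Matrix.mul_diagonal, PsiM, Matrix.of_apply]
  rw [Finset.mul_sum]
  exact Finset.sum_congr rfl fun i _ => by rw [one_div]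

lemma psiM_smul_dephase {M : ℕ} (hM : 1 ≤ M) :
    (M:ℂ) • dephase (PsiM M) = (1 : Matrix (Fin M) (Fin M) ℂ) := by
  have h0 : (M:ℂ) ≠ 0 := Nat.cast_ne_zero.mpr (by omega)
  ext i j
  by_cases h : i = j
  · subst h
    simp only [Matrix.smul_apply, dephase, PsiM, Matrix.of_apply, Matrix.diagonal_apply_eq,
      Matrix.one_apply_eq, smul_eq_mul]
    field_simp
  · simp [dephase, PsiM, Matrix.diagonal_apply_ne _ h, Matrix.one_apply_ne h]

end Aux2
section Aux3

/-- The CP map `X ↦ Tr(P X) • C`. -/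
noncomputable def traceform (P : Matrix ι ι ℂ) (C : Matrix κ κ ℂ) :
    Matrix ι ι ℂ →ₗ[ℂ] Matrix κ κ ℂ where
  toFun X := (P * X).trace • C
  map_add' X Y := by
    show (P * (X + Y)).trace • C = (P * X).trace • C + (P * Y).trace • C
    rw [mul_add, Matrix.trace_add, add_smul]
  map_smul' c X := by
    show (P * (c • X)).trace • C = (RingHom.id ℂ) c • ((P * X).trace • C)
    rw [Matrix.mul_smul, Matrix.trace_smul, smul_assoc, RingHom.id_apply]

@[simp] lemma traceform_apply (P : Matrix ι ι ℂ) (C : Matrix κ κ ℂ) (X : Matrix ι ι ℂ) :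
    traceform P C X = (P * X).trace • C := rfl

open scoped MatrixOrder in
lemma kron_psd {γ : Type*} [Fintype γ] [DecidableEq γ] {N : Matrix γ γ ℂ} {C : Matrix κ κ ℂ}
    (hN : N.PosSemidef) (hC : C.PosSemidef) :
    (Matrix.of fun p q : γ × κ => N p.1 q.1 * C p.2 q.2).PosSemidef := by
  obtain ⟨U, hU⟩ := CStarAlgebra.nonneg_iff_eq_star_mul_self.mp hN.nonneg
  rw [Matrix.star_eq_conjTranspose] at hU
  obtain ⟨L, hL⟩ := CStarAlgebra.nonneg_iff_eq_star_mul_self.mp hC.nonneg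
  rw [Matrix.star_eq_conjTranspose] at hL
  have key : (Matrix.of fun p q : γ × κ => N p.1 q.1 * C p.2 q.2)
      = (Matrix.of fun (t : γ × κ) (p : γ × κ) => U t.1 p.1 * L t.2 p.2)ᴴ *
        Matrix.of (fun (t : γ × κ) (p : γ × κ) => U t.1 p.1 * L t.2 p.2) := by
    ext p q
    rw [Matrix.mul_apply]
    simp only [Matrix.conjTranspose_apply, Matrix.of_apply]
    rw [Fintype.sum_prod_type, hU, hL, Matrix.mul_apply, Matrix.mul_apply,
      Finset.sum_mul_sum]
    simp only [Matrix.conjTranspose_apply]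
    exact Finset.sum_congr rfl fun u _ => Finset.sum_congr rfl fun m _ => by
      simp only [star_mul']
      ring
  rw [key]
  exact Matrix.posSemidef_conjTranspose_mul_self _

open scoped MatrixOrder in
lemma trace_slice_psd {k : ℕ} {P : Matrix ι ι ℂ} (hP : P.PosSemidef)
    {Mb : Matrix (Fin k × ι) (Fin k × ι) ℂ} (hMb : Mb.PosSemidef) :
    (Matrix.of fun a b : Fin k =>
      (P * Matrix.of fun x y : ι => Mb (a, x) (b, y)).trace).PosSemidef := by
  obtain ⟨J, hJ⟩ := CStarAlgebra.nonneg_iff_eq_star_mul_self.mp hP.nonneg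
  rw [Matrix.star_eq_conjTranspose] at hJ
  obtain ⟨K, hK⟩ := CStarAlgebra.nonneg_iff_eq_star_mul_self.mp hMb.nonneg
  rw [Matrix.star_eq_conjTranspose] at hK
  set Ka : Fin k → Matrix (Fin k × ι) ι ℂ := fun a => Matrix.of fun r x => K r (a, x) with hKa
  have hslice : ∀ a b : Fin k,
      (Matrix.of fun x y : ι => Mb (a, x) (b, y)) = (Ka a)ᴴ * Ka b := by
    intro a b
    ext x y
    rw [hK]
    simp [Matrix.mul_apply, Matrix.conjTranspose_apply, hKa]
  set G : Fin k → Matrix ι (Fin k × ι) ℂ := fun a => J * (Ka a)ᴴ with hG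
  have hentry : ∀ a b, (P * ((Ka a)ᴴ * Ka b)).trace = ((G a) * (G b)ᴴ).trace := by
    intro a b
    rw [hJ]
    calc (Jᴴ * J * ((Ka a)ᴴ * Ka b)).trace
        = (Jᴴ * (J * (Ka a)ᴴ * Ka b)).trace := by
          simp only [Matrix.mul_assoc]
      _ = ((J * (Ka a)ᴴ * Ka b) * Jᴴ).trace := Matrix.trace_mul_comm _ _
      _ = ((G a) * (G b)ᴴ).trace := by
          rw [hG, Matrix.conjTranspose_mul, Matrix.conjTranspose_conjTranspose,
            Matrix.mul_assoc]
  have key : (Matrix.of fun a b : Fin k =>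
        (P * Matrix.of fun x y : ι => Mb (a, x) (b, y)).trace)
      = (Matrix.of fun (u : ι × (Fin k × ι)) (a : Fin k) => star (G a u.1 u.2))ᴴ *
        Matrix.of fun (u : ι × (Fin k × ι)) (a : Fin k) => star (G a u.1 u.2) := by
    ext a b
    rw [Matrix.of_apply, hslice a b, hentry a b, Matrix.mul_apply]
    simp only [Matrix.conjTranspose_apply, Matrix.of_apply, star_star]
    rw [Fintype.sum_prod_type]
    simp only [Matrix.trace, Matrix.diag, Matrix.mul_apply, Matrix.conjTranspose_apply]
  rw [key]
  exact Matrix.posSemidef_conjTranspose_mul_self _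

lemma traceform_cp {P : Matrix ι ι ℂ} {C : Matrix κ κ ℂ}
    (hP : P.PosSemidef) (hC : C.PosSemidef) : CompletelyPositive (traceform P C) := by
  intro k Mb hMb
  have hk := kron_psd (trace_slice_psd hP hMb) hC
  have he : (Matrix.of fun p q : Fin k × κ =>
      traceform P C (Matrix.of fun x y => Mb (p.1, x) (q.1, y)) p.2 q.2)
      = Matrix.of fun p q : Fin k × κ =>
        (Matrix.of fun a b : Fin k =>
          (P * Matrix.of fun x y : ι => Mb (a, x) (b, y)).trace) p.1 q.1 * C p.2 q.2 := by
    ext p q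
    simp [Matrix.smul_apply, smul_eq_mul]
  rw [he]
  exact hk

lemma cp_add {Λ₁ Λ₂ : Matrix ι ι ℂ →ₗ[ℂ] Matrix κ κ ℂ}
    (h1 : CompletelyPositive Λ₁) (h2 : CompletelyPositive Λ₂) :
    CompletelyPositive (Λ₁ + Λ₂) := by
  intro k Mb hMb
  have he : (Matrix.of fun p q : Fin k × κ =>
      (Λ₁ + Λ₂) (Matrix.of fun x y => Mb (p.1, x) (q.1, y)) p.2 q.2)
      = (Matrix.of fun p q : Fin k × κ =>
          Λ₁ (Matrix.of fun x y => Mb (p.1, x) (q.1, y)) p.2 q.2)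
        + Matrix.of fun p q : Fin k × κ =>
          Λ₂ (Matrix.of fun x y => Mb (p.1, x) (q.1, y)) p.2 q.2 := by
    ext p q
    simp [Matrix.add_apply]
  rw [he]
  exact (h1 k Mb hMb).add (h2 k Mb hMb)

lemma cp_pos {Λ : Matrix ι ι ℂ →ₗ[ℂ] Matrix κ κ ℂ} (hΛ : CompletelyPositive Λ)
    {A : Matrix ι ι ℂ} (hA : A.PosSemidef) : (Λ A).PosSemidef := by
  have h := hΛ 1 (A.submatrix Prod.snd Prod.snd) (hA.submatrix _)
  have he : Λ A = (Matrix.of fun p q : Fin 1 × κ =>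
      Λ (Matrix.of fun x y => A.submatrix Prod.snd Prod.snd (p.1, x) (q.1, y)) p.2 q.2).submatrix
      (fun i : κ => ((0 : Fin 1), i)) (fun i : κ => ((0 : Fin 1), i)) := by
    ext i j
    rfl
  rw [he]
  exact h.submatrix _

end Aux3
section Aux4

/-- The dilution channel: a DIO mapping `Ψ_M` to `ρ'`, whenever `M Δ(ρ') ≥ ρ'`. -/
lemma exists_dio (ρ' : Matrix ι ι ℂ) (h : IsState ρ') (M : ℕ) (hM : 2 ≤ M)
    (hfeas : ((M : ℝ) • dephase ρ' - ρ').PosSemidef) :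
    ∃ Λ : Matrix (Fin M) (Fin M) ℂ →ₗ[ℂ] Matrix ι ι ℂ,
      CompletelyPositive Λ ∧ TracePreserving Λ ∧
      (∀ ω, Λ (dephase ω) = dephase (Λ ω)) ∧ Λ (PsiM M) = ρ' := by
  have hM1 : 1 ≤ M := by omega
  have hMc0 : (M:ℂ) ≠ 0 := Nat.cast_ne_zero.mpr (by omega)
  have hMc1 : (M:ℂ) - 1 ≠ 0 := by
    rw [sub_ne_zero]
    intro hc
    have : M = 1 := by exact_mod_cast hc
    omega
  have hfeasC : ((M:ℂ) • dephase ρ' - ρ').PosSemidef := by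
    rwa [real_smul_eqC] at hfeas
  set B : Matrix ι ι ℂ := ((M:ℂ) - 1)⁻¹ • ((M:ℂ) • dephase ρ' - ρ') with hB
  have hBpsd : B.PosSemidef := by
    have hcast : ((((M:ℝ) - 1)⁻¹ : ℝ) : ℂ) = ((M:ℂ) - 1)⁻¹ := by push_cast; ring
    rw [hB, ← hcast]
    refine psd_smul hfeasC ?_
    have h2M : (2:ℝ) ≤ (M:ℝ) := by exact_mod_cast hM
    have : (0:ℝ) < (M:ℝ) - 1 := by linarith
    exact le_of_lt (inv_pos.mpr this)
  have hBtr : B.trace = 1 := by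
    rw [hB, Matrix.trace_smul, Matrix.trace_sub, Matrix.trace_smul, trace_dephase, h.2,
      smul_eq_mul, smul_eq_mul, mul_one]
    exact inv_mul_cancel₀ hMc1
  have hΔB : dephase B = dephase ρ' := by
    rw [hB, dephase_smul, dephase_sub, dephase_smul, dephase_dephase]
    have : (M:ℂ) • dephase ρ' - dephase ρ' = ((M:ℂ) - 1) • dephase ρ' := by
      rw [sub_smul, one_smul]
    rw [this, smul_smul, inv_mul_cancel₀ hMc1, one_smul]
  have hkey : (M:ℂ)⁻¹ • ρ' + (1 - (M:ℂ)⁻¹) • B = dephase ρ' := by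
    rw [hB, smul_smul]
    have hc : (1 - (M:ℂ)⁻¹) * ((M:ℂ) - 1)⁻¹ = (M:ℂ)⁻¹ := by
      field_simp
    rw [hc, smul_sub, smul_smul, inv_mul_cancel₀ hMc0, one_smul]
    abel
  clear_value B
  refine ⟨traceform (PsiM M) ρ' + traceform (1 - PsiM M) B, ?_, ?_, ?_, ?_⟩
  · exact cp_add (traceform_cp psiM_psd h.1) (traceform_cp (one_sub_psiM_psd hM1) hBpsd)
  · intro X
    simp only [LinearMap.add_apply, traceform_apply, Matrix.trace_add, Matrix.trace_smul,
      smul_eq_mul, h.2, hBtr, mul_one]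
    rw [Matrix.sub_mul, Matrix.one_mul, Matrix.trace_sub]
    ring
  · intro ω
    simp only [LinearMap.add_apply, traceform_apply]
    rw [dephase_add, dephase_smul, dephase_smul, hΔB]
    rw [trace_psiM_mul_dephase, Matrix.sub_mul, Matrix.one_mul, Matrix.trace_sub,
      trace_psiM_mul_dephase, trace_dephase]
    rw [Matrix.sub_mul, Matrix.one_mul, Matrix.trace_sub]
    have h1 : ((M:ℂ)⁻¹ * ω.trace) • ρ' + (ω.trace - (M:ℂ)⁻¹ * ω.trace) • B
        = ω.trace • ((M:ℂ)⁻¹ • ρ' + (1 - (M:ℂ)⁻¹) • B) := by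
      rw [smul_add, ← mul_smul, ← mul_smul, mul_comm ((M:ℂ)⁻¹) ω.trace,
        show ω.trace - ω.trace * (M:ℂ)⁻¹ = ω.trace * (1 - (M:ℂ)⁻¹) by ring]
    rw [h1, hkey]
    rw [← add_smul]
    congr 1
    ring
  · simp only [LinearMap.add_apply, traceform_apply]
    rw [psiM_mul_self hM1, trace_psiM hM1, one_smul]
    rw [Matrix.sub_mul, Matrix.one_mul, psiM_mul_self hM1, sub_self, Matrix.trace_zero,
      zero_smul, add_zero]

open scoped MatrixOrder in
lemma msqrt_eq_cfc {A : Matrix ι ι ℂ} (hA : A.PosSemidef) : msqrt A = CFC.sqrt A := by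
  unfold msqrt
  rw [dif_pos hA, CFC.sqrt_eq_cfc, cfc_nnreal_eq_real _ A, hA.1.cfc_eq, Matrix.IsHermitian.cfc,
    Unitary.conjStarAlgAut_apply]
  refine congrArg (· * _) (congrArg (_ * ·) (congrArg Matrix.diagonal (funext fun i => ?_)))
  simp [hA.eigenvalues_nonneg i]

open scoped MatrixOrder in
lemma fid_self {ρ : Matrix ι ι ℂ} (h : IsState ρ) : Fid ρ ρ = 1 := by
  have hp := h.1
  have h1 : msqrt ρ = CFC.sqrt ρ := msqrt_eq_cfc hp
  have h2 : msqrt ρ * ρ * msqrt ρ = ρ ^ 2 := by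
    rw [h1]
    have hss := CFC.sqrt_mul_sqrt_self ρ hp.nonneg
    calc CFC.sqrt ρ * ρ * CFC.sqrt ρ
        = CFC.sqrt ρ * (CFC.sqrt ρ * CFC.sqrt ρ) * CFC.sqrt ρ := by rw [hss]
      _ = (CFC.sqrt ρ * CFC.sqrt ρ) * (CFC.sqrt ρ * CFC.sqrt ρ) := by
          rw [Matrix.mul_assoc, Matrix.mul_assoc, Matrix.mul_assoc]
      _ = ρ ^ 2 := by rw [hss, pow_two]
  have h3 : msqrt (msqrt ρ * ρ * msqrt ρ) = ρ := by
    rw [h2]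
    rw [msqrt_eq_cfc (hp.pow 2)]
    exact CFC.sqrt_sq ρ hp.nonneg
  rw [Fid, h3, h.2]
  norm_num

end Aux4
/-- Theorem 5: `C_{Δ,max}^ε(ρ) ≤ C_DIO^ε(ρ) ≤ C_{Δ,max}^ε(ρ) + 1`. -/
theorem CDIOeps_bounds {d : ℕ} (ρ : Matrix (Fin d) (Fin d) ℂ) (hρ : IsState ρ)
    (ε : ℝ) (hε : 0 ≤ ε) :
    CDmaxeps ρ ε ≤ CDIOeps ρ ε ∧ CDIOeps ρ ε ≤ CDmaxeps ρ ε + 1 := by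
  classical
  have hFidself : 1 - ε ≤ Fid ρ ρ := by rw [fid_self hρ]; linarith
  have hD : CDmaxeps ρ ε
      = sInf { r | ∃ ρ', IsState ρ' ∧ 1 - ε ≤ Fid ρ ρ' ∧ r = CDmax ρ' } := rfl
  have hC : CDIOeps ρ ε = sInf { r | ∃ M : ℕ, 1 ≤ M ∧ r = Real.logb 2 M ∧
      ∃ Λ : Matrix (Fin M) (Fin M) ℂ →ₗ[ℂ] Matrix (Fin d) (Fin d) ℂ,
        CompletelyPositive Λ ∧ TracePreserving Λ ∧ (∀ ω, Λ (dephase ω) = dephase (Λ ω)) ∧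
        1 - ε ≤ Fid ρ (Λ (PsiM M)) } := rfl
  have hDlb : ∀ x ∈ { r | ∃ ρ', IsState ρ' ∧ 1 - ε ≤ Fid ρ ρ' ∧ r = CDmax ρ' }, (0:ℝ) ≤ x := by
    rintro x ⟨ρ₀, h₀, -, rfl⟩
    exact CDmax_nonneg h₀
  have hDbdd : BddBelow { r | ∃ ρ', IsState ρ' ∧ 1 - ε ≤ Fid ρ ρ' ∧ r = CDmax ρ' } := ⟨0, hDlb⟩
  have hDne : { r | ∃ ρ', IsState ρ' ∧ 1 - ε ≤ Fid ρ ρ' ∧ r = CDmax ρ' }.Nonempty :=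
    ⟨CDmax ρ, ρ, hρ, hFidself, rfl⟩
  have hClb : ∀ x ∈ { r | ∃ M : ℕ, 1 ≤ M ∧ r = Real.logb 2 M ∧
      ∃ Λ : Matrix (Fin M) (Fin M) ℂ →ₗ[ℂ] Matrix (Fin d) (Fin d) ℂ,
        CompletelyPositive Λ ∧ TracePreserving Λ ∧ (∀ ω, Λ (dephase ω) = dephase (Λ ω)) ∧
        1 - ε ≤ Fid ρ (Λ (PsiM M)) }, (0:ℝ) ≤ x := by
    rintro x ⟨M, hM1, rfl, -⟩
    exact Real.logb_nonneg one_lt_two (by exact_mod_cast hM1)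
  have hCbdd : BddBelow { r | ∃ M : ℕ, 1 ≤ M ∧ r = Real.logb 2 M ∧
      ∃ Λ : Matrix (Fin M) (Fin M) ℂ →ₗ[ℂ] Matrix (Fin d) (Fin d) ℂ,
        CompletelyPositive Λ ∧ TracePreserving Λ ∧ (∀ ω, Λ (dephase ω) = dephase (Λ ω)) ∧
        1 - ε ≤ Fid ρ (Λ (PsiM M)) } := ⟨0, hClb⟩
  -- The dilution construction, for an arbitrary state `ρ'`.
  have hconstr : ∀ ρ' : Matrix (Fin d) (Fin d) ℂ, IsState ρ' →
      ∃ M : ℕ, 1 ≤ M ∧ Real.logb 2 M ≤ CDmax ρ' + 1 ∧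
      ∃ Λ : Matrix (Fin M) (Fin M) ℂ →ₗ[ℂ] Matrix (Fin d) (Fin d) ℂ,
        CompletelyPositive Λ ∧ TracePreserving Λ ∧ (∀ ω, Λ (dephase ω) = dephase (Λ ω)) ∧
        Λ (PsiM M) = ρ' := by
    intro ρ' h'
    have hSne : {l : ℝ | 0 ≤ l ∧ (l • dephase ρ' - ρ').PosSemidef}.Nonempty :=
      ⟨(Fintype.card (Fin d) : ℝ), Nat.cast_nonneg _, card_smul_dephase_sub_psd h'.1⟩
    have hs1 : 1 ≤ sInf {l : ℝ | 0 ≤ l ∧ (l • dephase ρ' - ρ').PosSemidef} :=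
      sInf_S_ge_one h'
    set s := sInf {l : ℝ | 0 ≤ l ∧ (l • dephase ρ' - ρ').PosSemidef} with hs
    have hfloor1 : 1 ≤ Nat.floor s := Nat.le_floor (by exact_mod_cast hs1)
    have hM2 : 2 ≤ Nat.floor s + 1 := by omega
    have hsM : s < ((Nat.floor s + 1 : ℕ) : ℝ) := by
      have := Nat.lt_floor_add_one s
      push_cast
      linarith
    have hfeas : (((Nat.floor s + 1 : ℕ) : ℝ) • dephase ρ' - ρ').PosSemidef := by
      obtain ⟨l, hlS, hlM⟩ := exists_lt_of_csInf_lt hSne hsM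
      exact S_upward h'.1 hlS.2 (le_of_lt hlM)
    obtain ⟨Λ, hcp, htp, hcov, heq⟩ := exists_dio ρ' h' (Nat.floor s + 1) hM2 hfeas
    refine ⟨Nat.floor s + 1, by omega, ?_, Λ, hcp, htp, hcov, heq⟩
    have hs0 : (0:ℝ) < s := by linarith
    have hM2s : (((Nat.floor s + 1 : ℕ)) : ℝ) ≤ 2 * s := by
      have hfl : (Nat.floor s : ℝ) ≤ s := Nat.floor_le (by linarith)
      push_cast
      linarith
    have hCD : CDmax ρ' = Real.logb 2 s := rfl
    calc Real.logb 2 ((Nat.floor s + 1 : ℕ) : ℝ) ≤ Real.logb 2 (2 * s) :=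
          Real.logb_le_logb_of_le one_lt_two (by positivity) hM2s
      _ = 1 + Real.logb 2 s := by
          rw [Real.logb_mul two_ne_zero (ne_of_gt hs0), Real.logb_self_eq_one one_lt_two]
      _ = CDmax ρ' + 1 := by rw [hCD]; ring
  -- nonemptiness of the DIO cost set
  have hCne : { r | ∃ M : ℕ, 1 ≤ M ∧ r = Real.logb 2 M ∧
      ∃ Λ : Matrix (Fin M) (Fin M) ℂ →ₗ[ℂ] Matrix (Fin d) (Fin d) ℂ,
        CompletelyPositive Λ ∧ TracePreserving Λ ∧ (∀ ω, Λ (dephase ω) = dephase (Λ ω)) ∧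
        1 - ε ≤ Fid ρ (Λ (PsiM M)) }.Nonempty := by
    obtain ⟨M, hM1, -, Λ, hcp, htp, hcov, heq⟩ := hconstr ρ hρ
    exact ⟨Real.logb 2 M, M, hM1, rfl, Λ, hcp, htp, hcov, by rw [heq]; exact hFidself⟩
  -- lower bound: every achievable rate dominates the smoothed monotone
  have hlb : ∀ r ∈ { r | ∃ M : ℕ, 1 ≤ M ∧ r = Real.logb 2 M ∧
      ∃ Λ : Matrix (Fin M) (Fin M) ℂ →ₗ[ℂ] Matrix (Fin d) (Fin d) ℂ,
        CompletelyPositive Λ ∧ TracePreserving Λ ∧ (∀ ω, Λ (dephase ω) = dephase (Λ ω)) ∧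
        1 - ε ≤ Fid ρ (Λ (PsiM M)) }, CDmaxeps ρ ε ≤ r := by
    rintro r ⟨M, hM1, rfl, Λ, hcp, htp, hcov, hfid⟩
    have hst : IsState (Λ (PsiM M)) :=
      ⟨cp_pos hcp psiM_psd, by rw [htp (PsiM M), trace_psiM hM1]⟩
    have hMS : ((M:ℝ)) ∈ {l : ℝ | 0 ≤ l ∧
        (l • dephase (Λ (PsiM M)) - Λ (PsiM M)).PosSemidef} := by
      refine ⟨Nat.cast_nonneg _, ?_⟩
      have h1 : (M:ℝ) • dephase (Λ (PsiM M)) - Λ (PsiM M)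
          = Λ ((1 : Matrix (Fin M) (Fin M) ℂ) - PsiM M) := by
        rw [real_smul_eqC, show (((M:ℝ)):ℂ) = ((M:ℂ)) by push_cast; ring,
          ← hcov (PsiM M), ← map_smul, psiM_smul_dephase hM1, ← map_sub]
      rw [h1]
      exact cp_pos hcp (one_sub_psiM_psd hM1)
    have hS1 : 1 ≤ sInf {l : ℝ | 0 ≤ l ∧
        (l • dephase (Λ (PsiM M)) - Λ (PsiM M)).PosSemidef} := sInf_S_ge_one hst
    have hCDle : CDmax (Λ (PsiM M)) ≤ Real.logb 2 M := by
      have hle : sInf {l : ℝ | 0 ≤ l ∧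
          (l • dephase (Λ (PsiM M)) - Λ (PsiM M)).PosSemidef} ≤ (M:ℝ) :=
        csInf_le ⟨0, fun l hl => hl.1⟩ hMS
      have hCD : CDmax (Λ (PsiM M)) = Real.logb 2 (sInf {l : ℝ | 0 ≤ l ∧
          (l • dephase (Λ (PsiM M)) - Λ (PsiM M)).PosSemidef}) := rfl
      rw [hCD]
      exact Real.logb_le_logb_of_le one_lt_two (by linarith) hle
    refine le_trans ?_ hCDle
    rw [hD]
    exact csInf_le hDbdd ⟨Λ (PsiM M), hst, hfid, rfl⟩
  constructor
  · rw [hC]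
    exact le_csInf hCne hlb
  · -- upper bound
    have hub : ∀ r ∈ { r | ∃ ρ', IsState ρ' ∧ 1 - ε ≤ Fid ρ ρ' ∧ r = CDmax ρ' },
        CDIOeps ρ ε - 1 ≤ r := by
      rintro r ⟨ρ', hst, hfid, rfl⟩
      obtain ⟨M, hM1, hlog, Λ, hcp, htp, hcov, heq⟩ := hconstr ρ' hst
      have hmem : Real.logb 2 M ∈ { r | ∃ M : ℕ, 1 ≤ M ∧ r = Real.logb 2 M ∧
          ∃ Λ : Matrix (Fin M) (Fin M) ℂ →ₗ[ℂ] Matrix (Fin d) (Fin d) ℂ,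
            CompletelyPositive Λ ∧ TracePreserving Λ ∧ (∀ ω, Λ (dephase ω) = dephase (Λ ω)) ∧
            1 - ε ≤ Fid ρ (Λ (PsiM M)) } :=
        ⟨M, hM1, rfl, Λ, hcp, htp, hcov, by rw [heq]; exact hfid⟩
      have h2 : CDIOeps ρ ε ≤ Real.logb 2 M := by
        rw [hC]
        exact csInf_le hCbdd hmem
      linarith
    have h3 : CDIOeps ρ ε - 1 ≤ CDmaxeps ρ ε := by
      rw [hD]
      exact le_csInf hDne hub
    linarith

end OneShot
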